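/- arXiv:1209.4766 — 2 statements merged into one kernel-verified Lean document; each statement's English description precedes it below -/
import Mathlib

section
/- For all φ, ψ ∈ 𝓒 one has ⟨φ, ψ⟩_n → ⟨φ, ψ⟩ as n → ∞. -/
open MeasureTheory Filter Topology

noncomputable section

namespace Mosco

variable {E : Type*} [MeasurableSpace E]

/-- The inner product of two real-valued functions with respect to a measure,
`⟨φ, ψ⟩ = ∫ φ ψ dμ`. -/
def ip (μ : Measure E) (φ ψ : E → ℝ) : ℝ := ∫ x, φ x * ψ x ∂μ

lemma integrable_mul_of_memℒp {μ : Measure E} {f g : E → ℝ}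
    (hf : MemLp f 2 μ) (hg : MemLp g 2 μ) : Integrable (fun x => f x * g x) μ := by
  refine Integrable.mono' (hf.integrable_sq.add hg.integrable_sq) (hf.1.mul hg.1) ?_
  filter_upwards with x
  simp only [Pi.add_apply, Real.norm_eq_abs, abs_mul]
  nlinarith [sq_nonneg (|f x| - |g x|), sq_abs (f x), sq_abs (g x)]

lemma ip_nonneg {μ : Measure E} (f : E → ℝ) : 0 ≤ ip μ f f :=
  integral_nonneg fun x => mul_self_nonneg _

lemma ip_cauchy {μ : Measure E} {f g : E → ℝ} (hf : MemLp f 2 μ) (hg : MemLp g 2 μ) :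
    |ip μ f g| ≤ Real.sqrt (ip μ f f) * Real.sqrt (ip μ g g) := by
  set F := hf.toLp f
  set G := hg.toLp g
  have hip : ∀ {u v : E → ℝ} (hu : MemLp u 2 μ) (hv : MemLp v 2 μ),
      ip μ u v = @inner ℝ _ _ (hu.toLp u) (hv.toLp v) := by
    intro u v hu hv
    rw [L2.inner_def]
    refine (integral_congr_ae ?_).symm
    filter_upwards [hu.coeFn_toLp, hv.coeFn_toLp] with x hx hy
    simp [hx, hy, RCLike.inner_apply, mul_comm]
  rw [hip hf hg, hip hf hf, hip hg hg]
  have h1 : Real.sqrt (@inner ℝ _ _ F F) = ‖F‖ := by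
    rw [real_inner_self_eq_norm_mul_norm, Real.sqrt_mul_self (norm_nonneg _)]
  have h2 : Real.sqrt (@inner ℝ _ _ G G) = ‖G‖ := by
    rw [real_inner_self_eq_norm_mul_norm, Real.sqrt_mul_self (norm_nonneg _)]
  rw [h1, h2]
  exact abs_real_inner_le_norm F G

lemma ip_sub_right {μ : Measure E} {f g h : E → ℝ} (hf : MemLp f 2 μ)
    (hg : MemLp g 2 μ) (hh : MemLp h 2 μ) :
    ip μ f (fun x => g x - h x) = ip μ f g - ip μ f h := by
  unfold ip
  rw [← integral_sub (integrable_mul_of_memℒp hf hg) (integrable_mul_of_memℒp hf hh)]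
  congr 1; funext x; ring

lemma ip_sub_sub {μ : Measure E} {f g : E → ℝ} (hf : MemLp f 2 μ) (hg : MemLp g 2 μ) :
    ip μ (fun x => f x - g x) (fun x => f x - g x)
      = ip μ f f - 2 * ip μ f g + ip μ g g := by
  have hff := integrable_mul_of_memℒp hf hf
  have hfg := integrable_mul_of_memℒp hf hg
  have hgg := integrable_mul_of_memℒp hg hg
  unfold ip
  calc ∫ x, (f x - g x) * (f x - g x) ∂μ
      = ∫ x, (f x * f x - 2 * (f x * g x) + g x * g x) ∂μ := by
        congr 1; funext x; ring
    _ = ∫ x, f x * f x ∂μ - 2 * ∫ x, f x * g x ∂μ + ∫ x, g x * g x ∂μ := by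
        have h2 : Integrable (fun x => 2 * (f x * g x)) μ := hfg.const_mul 2
        have h1 : Integrable (fun x => f x * f x - 2 * (f x * g x)) μ := hff.sub h2
        rw [integral_add h1 hgg, integral_sub hff h2, MeasureTheory.integral_const_mul]

/-- The framework of Section 2.1: mutually singular probability measures `ν n`, `n : ℕ`
(`ν 0` playing the role of the limit measure `ν`), such that `L²(E, ν 0)` is separable,
together with disjoint sets `En n` carrying `ν n`, and a linear subset `F = 𝓕 ⊆ 𝓓`
which is dense in `L²(E, ν 0)`. -/
structure Frame (E : Type*) [MeasurableSpace E] where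
  ν : ℕ → Measure E
  prob : ∀ n, IsProbabilityMeasure (ν n)
  singular : ∀ m n, m ≠ n → (ν m).MutuallySingular (ν n)
  separableL2 : TopologicalSpace.SeparableSpace (Lp ℝ 2 (ν 0))
  En : ℕ → Set E
  measEn : ∀ n, MeasurableSet (En n)
  disjEn : ∀ m n, m ≠ n → Disjoint (En m) (En n)
  nullEn : ∀ n, ν n (En n)ᶜ = 0
  F : Set (E → ℝ)
  F_measurable : ∀ φ ∈ F, Measurable φ
  F_memL2 : ∀ φ ∈ F, ∀ n, MemLp φ 2 (ν n)
  F_tendsto : ∀ φ ∈ F, Tendsto (fun n => ip (ν n) φ φ) atTop (𝓝 (ip (ν 0) φ φ))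
  F_linear : ∀ φ ∈ F, ∀ ψ ∈ F, ∀ a b : ℝ, (fun x => a * φ x + b * ψ x) ∈ F
  F_dense : ∀ f : E → ℝ, Measurable f → MemLp f 2 (ν 0) → ∀ ε : ℝ, 0 < ε →
    ∃ φ ∈ F, ip (ν 0) (fun x => f x - φ x) (fun x => f x - φ x) < ε

/-- The set `𝓓`: everywhere defined measurable functions lying in every `L²(E, ν n)`
whose `ν n`-norms converge to the `ν 0`-norm. -/
def Frame.D (fr : Frame E) : Set (E → ℝ) :=
  {φ | Measurable φ ∧ (∀ n, MemLp φ 2 (fr.ν n)) ∧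
    Tendsto (fun n => ip (fr.ν n) φ φ) atTop (𝓝 (ip (fr.ν 0) φ φ))}

/-- The set `𝓒`: elements of `𝓓` satisfying conditions (c1) and (c2). -/
def Frame.C (fr : Frame E) : Set (E → ℝ) :=
  {φ | φ ∈ fr.D ∧ (∀ n, 1 ≤ n → ∃ g ∈ fr.F, φ =ᵐ[fr.ν n] g) ∧
    ∀ ψ ∈ fr.F, Tendsto (fun n => ip (fr.ν n) φ ψ) atTop (𝓝 (ip (fr.ν 0) φ ψ))}

/-- The set `𝓥` of multipliers mapping `𝓓` into `𝓓` and `𝓕` into `𝓕`. -/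
def Frame.V (fr : Frame E) : Set (E → ℝ) :=
  {ψ | Measurable ψ ∧ (∀ n, MemLp ψ 2 (fr.ν n)) ∧
    (∀ σ ∈ fr.D, (fun x => σ x * ψ x) ∈ fr.D) ∧
    (∀ τ ∈ fr.F, (fun x => τ x * ψ x) ∈ fr.F)}

/-- `w`-convergence of a sequence `φs` (with `φs n` regarded as an element of
`L²(E, ν n)`) to `φ ∈ L²(E, ν 0)`. -/
def Frame.WConv (fr : Frame E) (φs : ℕ → E → ℝ) (φ : E → ℝ) : Prop :=
  ∀ ψ ∈ fr.C, Tendsto (fun n => ip (fr.ν n) (φs n) ψ) atTop (𝓝 (ip (fr.ν 0) φ ψ))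

/-- `s`-convergence: `w`-convergence together with convergence of the norms. -/
def Frame.SConv (fr : Frame E) (φs : ℕ → E → ℝ) (φ : E → ℝ) : Prop :=
  fr.WConv φs φ ∧
  Tendsto (fun n => ip (fr.ν n) (φs n) (φs n)) atTop (𝓝 (ip (fr.ν 0) φ φ))

/-- Lemma 2.1 (d): for all `φ, ψ ∈ 𝓒` one has `⟨φ, ψ⟩ₙ → ⟨φ, ψ⟩` as `n → ∞`. -/
theorem ip_tendsto_of_mem_C (fr : Frame E) {φ ψ : E → ℝ} (hφ : φ ∈ fr.C) (hψ : ψ ∈ fr.C) :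
    Tendsto (fun n => ip (fr.ν n) φ ψ) atTop (𝓝 (ip (fr.ν 0) φ ψ)) := by
  obtain ⟨⟨hφm, hφmem, hφnorm⟩, hφc1, hφc2⟩ := hφ
  obtain ⟨⟨hψm, hψmem, hψnorm⟩, hψc1, hψc2⟩ := hψ
  rw [Metric.tendsto_atTop]
  intro ε hε
  obtain ⟨B, hB⟩ := hφnorm.bddAbove_range
  set M := Real.sqrt B + 1 with hMdef
  have hM0 : 0 < M := by positivity
  have hMn : ∀ n, Real.sqrt (ip (fr.ν n) φ φ) ≤ M := by
    intro n
    have := hB (Set.mem_range_self n)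
    have := Real.sqrt_le_sqrt this
    linarith [Real.sqrt_nonneg B]
  set δ := ε / (3 * M) with hδdef
  have hδ0 : 0 < δ := by positivity
  have hMδ : M * δ = ε / 3 := by
    rw [hδdef]; field_simp
  obtain ⟨χ, hχF, hχ0⟩ := fr.F_dense ψ hψm (hψmem 0) (δ ^ 2) (by positivity)
  have hχmem := fr.F_memL2 χ hχF
  -- the norms of ψ - χ converge
  have hd : Tendsto (fun n => ip (fr.ν n) (fun x => ψ x - χ x) (fun x => ψ x - χ x)) atTop
      (𝓝 (ip (fr.ν 0) (fun x => ψ x - χ x) (fun x => ψ x - χ x))) := by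
    have h := (hψnorm.sub ((hψc2 χ hχF).const_mul 2)).add (fr.F_tendsto χ hχF)
    rw [show ip (fr.ν 0) ψ ψ - 2 * ip (fr.ν 0) ψ χ + ip (fr.ν 0) χ χ
        = ip (fr.ν 0) (fun x => ψ x - χ x) (fun x => ψ x - χ x) from
        (ip_sub_sub (hψmem 0) (hχmem 0)).symm] at h
    exact h.congr fun n => by
      rw [ip_sub_sub (hψmem n) (hχmem n)]
  have hev1 : ∀ᶠ n in atTop,
      ip (fr.ν n) (fun x => ψ x - χ x) (fun x => ψ x - χ x) < δ ^ 2 :=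
    hd.eventually_lt_const hχ0
  obtain ⟨N1, h1⟩ := eventually_atTop.mp hev1
  obtain ⟨N2, h2⟩ := Metric.tendsto_atTop.mp (hφc2 χ hχF) (ε / 4) (by positivity)
  refine ⟨max N1 N2, fun n hn => ?_⟩
  have hn1 := h1 n (le_trans (le_max_left _ _) hn)
  have hn2 := h2 n (le_trans (le_max_right _ _) hn)
  rw [Real.dist_eq] at hn2 ⊢
  have hsplit : ip (fr.ν n) φ ψ - ip (fr.ν 0) φ ψ
      = ip (fr.ν n) φ (fun x => ψ x - χ x) + (ip (fr.ν n) φ χ - ip (fr.ν 0) φ χ)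
        - ip (fr.ν 0) φ (fun x => ψ x - χ x) := by
    rw [ip_sub_right (hφmem n) (hψmem n) (hχmem n),
      ip_sub_right (hφmem 0) (hψmem 0) (hχmem 0)]
    ring
  have sqrt_bound : ∀ m, ip (fr.ν m) (fun x => ψ x - χ x) (fun x => ψ x - χ x) < δ ^ 2 →
      |ip (fr.ν m) φ (fun x => ψ x - χ x)| ≤ M * δ := by
    intro m hm
    calc |ip (fr.ν m) φ (fun x => ψ x - χ x)|
        ≤ Real.sqrt (ip (fr.ν m) φ φ) *
          Real.sqrt (ip (fr.ν m) (fun x => ψ x - χ x) (fun x => ψ x - χ x)) :=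
          ip_cauchy (hφmem m) ((hψmem m).sub (hχmem m))
      _ ≤ M * δ := by
          refine mul_le_mul (hMn m) ?_ (Real.sqrt_nonneg _) hM0.le
          calc Real.sqrt _ ≤ Real.sqrt (δ ^ 2) := Real.sqrt_le_sqrt hm.le
            _ = δ := Real.sqrt_sq hδ0.le
  have e1 := sqrt_bound n hn1
  have e3 := sqrt_bound 0 hχ0
  rw [hsplit]
  calc |ip (fr.ν n) φ (fun x => ψ x - χ x) + (ip (fr.ν n) φ χ - ip (fr.ν 0) φ χ)
        - ip (fr.ν 0) φ (fun x => ψ x - χ x)|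
      ≤ |ip (fr.ν n) φ (fun x => ψ x - χ x)| + |ip (fr.ν n) φ χ - ip (fr.ν 0) φ χ|
        + |ip (fr.ν 0) φ (fun x => ψ x - χ x)| := by
        exact (abs_sub _ _).trans (by gcongr; exact abs_add_le _ _)
    _ < ε := by rw [hMδ] at e1 e3; linarith


end Mosco
end
end

section
/- If a sequence φ_n ∈ 𝓒 w-converges to some φ ∈ L²(E, ν), then the sequence of norms ⟨φ_n, φ_n⟩_n, n ∈ ℕ, is bounded. -/
open MeasureTheory Filter Topology

noncomputable section

namespace Mosco

variable {E : Type*} [MeasurableSpace E]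

/-- Auxiliary lemmas for Proposition 2.3 (a). -/
lemma ip_self_nonneg (μ : Measure E) (f : E → ℝ) : 0 ≤ ip μ f f :=
  integral_nonneg fun x => mul_self_nonneg _

lemma ip_eq_inner (μ : Measure E) (f g : E → ℝ) (hf : MemLp f 2 μ) (hg : MemLp g 2 μ) :
    ip μ f g = @inner ℝ _ _ (hf.toLp f) (hg.toLp g) := by
  rw [L2.inner_def]
  refine integral_congr_ae ?_
  filter_upwards [hf.coeFn_toLp, hg.coeFn_toLp] with x h h'
  simp [ip, h, h', RCLike.inner_apply, mul_comm]

lemma abs_ip_le (μ : Measure E) (f g : E → ℝ) (hf : MemLp f 2 μ) (hg : MemLp g 2 μ) :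
    |ip μ f g| ≤ Real.sqrt (ip μ f f) * Real.sqrt (ip μ g g) := by
  rw [ip_eq_inner μ f g hf hg, ip_eq_inner μ f f hf hf, ip_eq_inner μ g g hg hg,
    real_inner_self_eq_norm_sq, real_inner_self_eq_norm_sq,
    Real.sqrt_sq (norm_nonneg _), Real.sqrt_sq (norm_nonneg _)]
  exact abs_real_inner_le_norm _ _

lemma exists_sqrt_sqrt_gt (R : ℝ) : ∃ K : ℕ, R < Real.sqrt (Real.sqrt ((K : ℝ) + 1)) := by
  obtain ⟨K, hK⟩ := exists_nat_gt (((max 0 R) ^ 2) ^ 2)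
  refine ⟨K, lt_of_le_of_lt (le_max_right 0 R) ?_⟩
  have h0 : (0 : ℝ) ≤ max 0 R := le_max_left 0 R
  rw [Real.lt_sqrt h0, Real.lt_sqrt (by positivity)]
  calc ((max 0 R) ^ 2) ^ 2 < K := hK
    _ ≤ (K : ℝ) + 1 := by linarith

lemma tendsto_zero_aux {n : ℕ → ℕ} (hmono : StrictMono n) {C : ℝ} (hC : 0 ≤ C) {v : ℕ → ℝ}
    (h1 : ∀ k, |v (n k)| ≤ C / Real.sqrt (Real.sqrt ((k : ℝ) + 1)))
    (h2 : ∀ m, (∀ k, m ≠ n k) → v m = 0) :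
    Tendsto v atTop (𝓝 0) := by
  rw [Metric.tendsto_atTop]
  intro ε hε
  obtain ⟨K, hK⟩ := exists_sqrt_sqrt_gt (C / ε)
  refine ⟨n K, fun m hm => ?_⟩
  rw [Real.dist_eq, sub_zero]
  by_cases hmem : ∃ k, m = n k
  · obtain ⟨k, rfl⟩ := hmem
    have hkK : K ≤ k := hmono.le_iff_le.mp hm
    have hposK : (0 : ℝ) < Real.sqrt (Real.sqrt ((K : ℝ) + 1)) := by positivity
    have hcast : ((K : ℝ)) ≤ (k : ℝ) := Nat.cast_le.mpr hkK
    have hbK : Real.sqrt (Real.sqrt ((K : ℝ) + 1)) ≤ Real.sqrt (Real.sqrt ((k : ℝ) + 1)) := by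
      gcongr
    calc |v (n k)| ≤ C / Real.sqrt (Real.sqrt ((k : ℝ) + 1)) := h1 k
      _ ≤ C / Real.sqrt (Real.sqrt ((K : ℝ) + 1)) := by gcongr
      _ < ε := by
          rw [div_lt_iff₀ hposK]
          have := (div_lt_iff₀ hε).mp hK
          nlinarith
  · push_neg at hmem
    rw [h2 m hmem]
    simpa using hε

/-- Proposition 2.3 (a): if a sequence `φs n ∈ 𝓒` `w`-converges to some
`φ ∈ L²(E, ν)`, then the sequence of norms `⟨φs n, φs n⟩ₙ` is bounded. -/
theorem wconv_norm_bounded (fr : Frame E) (φs : ℕ → E → ℝ) (hφs : ∀ n, φs n ∈ fr.C)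
    (φ : E → ℝ) (hφm : Measurable φ) (hφ2 : MemLp φ 2 (fr.ν 0)) (hw : fr.WConv φs φ) :
    ∃ M : ℝ, ∀ n, ip (fr.ν n) (φs n) (φs n) ≤ M := by
  by_contra hbdd
  push_neg at hbdd
  set a : ℕ → ℝ := fun m => ip (fr.ν m) (φs m) (φs m) with ha_def
  -- extract a strictly increasing subsequence along which the norms blow up
  have hfreq : ∀ k : ℕ, ∃ᶠ m in atTop, (1 ≤ m ∧ ((k : ℝ) + 1) < a m) := by
    intro k
    rw [Filter.frequently_atTop]
    intro N
    have hne : (Finset.range (N + 1)).Nonempty := ⟨0, by simp⟩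
    obtain ⟨m, hm⟩ := hbdd (max (((k : ℝ)) + 1) ((Finset.range (N + 1)).sup' hne a))
    have hmN : N + 1 ≤ m := by
      by_contra hc
      push_neg at hc
      have h1 : a m ≤ (Finset.range (N + 1)).sup' hne a :=
        Finset.le_sup' a (Finset.mem_range.mpr hc)
      have h2 := le_max_right (((k : ℝ)) + 1) ((Finset.range (N + 1)).sup' hne a)
      linarith
    exact ⟨m, by omega, by omega, lt_of_le_of_lt (le_max_left _ _) hm⟩
  obtain ⟨n, hmono, hn⟩ := Filter.extraction_forall_of_frequently hfreq
  set b : ℕ → ℝ := fun k => Real.sqrt (Real.sqrt ((k : ℝ) + 1)) with hb_def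
  have hb1 : ∀ k, 1 ≤ b k := by
    intro k
    have h0 : (0:ℝ) ≤ (k:ℝ) := Nat.cast_nonneg k
    refine Real.le_sqrt_of_sq_le ?_
    rw [one_pow]
    refine Real.le_sqrt_of_sq_le ?_
    nlinarith
  have hbpos : ∀ k, 0 < b k := fun k => lt_of_lt_of_le one_pos (hb1 k)
  have hb2 : ∀ k, b k ^ 2 = Real.sqrt ((k : ℝ) + 1) := fun k =>
    Real.sq_sqrt (Real.sqrt_nonneg _)
  have hb4 : ∀ k, b k ^ 2 * b k ^ 2 = (k : ℝ) + 1 := fun k => by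
    rw [hb2]; exact Real.mul_self_sqrt (by positivity)
  have hak : ∀ k : ℕ, ((k : ℝ) + 1) ≤ a (n k) := fun k => (hn k).2.le
  have hapos : ∀ k, 0 < a (n k) := fun k => lt_of_lt_of_le (by positivity) (hak k)
  set c : ℕ → ℝ := fun k => b k / a (n k) with hc_def
  have hcpos : ∀ k, 0 < c k := fun k => div_pos (hbpos k) (hapos k)
  set ψ : E → ℝ := fun x => ∑' k, (fr.En (n k)).indicator (fun y => c k * φs (n k) y) x
    with hψ_def
  have hCm : ∀ m, Measurable (φs m) := fun m => (hφs m).1.1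
  have hC2 : ∀ m j, MemLp (φs m) 2 (fr.ν j) := fun m j => (hφs m).1.2.1 j
  have hdisj : ∀ j k, j ≠ k → ∀ x, x ∈ fr.En (n k) → x ∉ fr.En (n j) := by
    intro j k hjk x hx hx'
    exact Set.disjoint_left.mp (fr.disjEn (n j) (n k) fun h => hjk (hmono.injective h)) hx' hx
  have hψ_on : ∀ k x, x ∈ fr.En (n k) → ψ x = c k * φs (n k) x := by
    intro k x hx
    simp only [hψ_def]
    rw [tsum_eq_single k fun j hj => Set.indicator_of_notMem (hdisj j k hj x hx) _]
    exact Set.indicator_of_mem hx _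
  have hψ_off : ∀ x, (∀ k, x ∉ fr.En (n k)) → ψ x = 0 := by
    intro x hx
    simp only [hψ_def]
    calc (∑' k, (fr.En (n k)).indicator (fun y => c k * φs (n k) y) x)
        = ∑' (_ : ℕ), (0 : ℝ) := tsum_congr fun k => Set.indicator_of_notMem (hx k) _
      _ = 0 := tsum_zero
  have hae : ∀ m, ∀ᵐ x ∂ fr.ν m, x ∈ fr.En m := fun m =>
    ae_iff.mpr (by exact fr.nullEn m)
  have hψ_eq : ∀ k, ψ =ᵐ[fr.ν (n k)] fun x => c k * φs (n k) x := fun k =>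
    (hae (n k)).mono fun x hx => hψ_on k x hx
  have hψ_zero : ∀ m, (∀ k, m ≠ n k) → ψ =ᵐ[fr.ν m] fun _ => (0 : ℝ) := by
    intro m hm
    refine (hae m).mono fun x hx => ?_
    exact hψ_off x fun k hk => Set.disjoint_left.mp (fr.disjEn m (n k) (hm k)) hx hk
  have h0ne : ∀ k, (0 : ℕ) ≠ n k := fun k h => by
    have := (hn k).1; omega
  -- measurability of ψ
  have hfk : ∀ k, Measurable ((fr.En (n k)).indicator fun y => c k * φs (n k) y) :=
    fun k => ((hCm (n k)).const_mul (c k)).indicator (fr.measEn (n k))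
  have hsum : ∀ x, Summable fun k => (fr.En (n k)).indicator (fun y => c k * φs (n k) y) x := by
    intro x
    by_cases hx : ∃ k, x ∈ fr.En (n k)
    · obtain ⟨k, hk⟩ := hx
      refine summable_of_ne_finset_zero (s := {k}) fun j hj => ?_
      simp only [Finset.mem_singleton] at hj
      exact Set.indicator_of_notMem (hdisj j k hj x hk) _
    · push_neg at hx
      exact summable_of_ne_finset_zero (s := (∅ : Finset ℕ)) fun j _ =>
        Set.indicator_of_notMem (hx j) _
  have hψm : Measurable ψ := by
    refine measurable_of_tendsto_metrizable
      (f := fun N x => ∑ k ∈ Finset.range N, (fr.En (n k)).indicator (fun y => c k * φs (n k) y) x)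
      (fun N => Finset.measurable_sum _ fun k _ => hfk k) ?_
    rw [tendsto_pi_nhds]
    intro x
    exact (hsum x).hasSum.tendsto_sum_nat
  have hψ2 : ∀ m, MemLp ψ 2 (fr.ν m) := by
    intro m
    by_cases hmem : ∃ k, m = n k
    · obtain ⟨k, rfl⟩ := hmem
      exact ((hC2 (n k) (n k)).const_mul (c k)).ae_eq (hψ_eq k).symm
    · push_neg at hmem
      exact (MemLp.zero : MemLp (0 : E → ℝ) 2 (fr.ν m)).ae_eq (hψ_zero m hmem).symm
  -- integral identities
  have hipl : ∀ k (τ : E → ℝ), ip (fr.ν (n k)) ψ τ = c k * ip (fr.ν (n k)) (φs (n k)) τ := by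
    intro k τ
    simp only [ip]
    rw [← integral_const_mul]
    refine integral_congr_ae ((hψ_eq k).mono fun x hx => ?_)
    simp only [hx]; ring
  have hipr : ∀ k (τ : E → ℝ), ip (fr.ν (n k)) τ ψ = c k * ip (fr.ν (n k)) τ (φs (n k)) := by
    intro k τ
    simp only [ip]
    rw [← integral_const_mul]
    refine integral_congr_ae ((hψ_eq k).mono fun x hx => ?_)
    simp only [hx]; ring
  have hipzl : ∀ m, (∀ k, m ≠ n k) → ∀ τ : E → ℝ, ip (fr.ν m) ψ τ = 0 := by
    intro m hm τ
    simp only [ip]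
    rw [show (∫ x, ψ x * τ x ∂ fr.ν m) = ∫ _, (0 : ℝ) ∂ fr.ν m from
      integral_congr_ae ((hψ_zero m hm).mono fun x hx => by simp [hx])]
    simp
  have hipzr : ∀ m, (∀ k, m ≠ n k) → ∀ τ : E → ℝ, ip (fr.ν m) τ ψ = 0 := by
    intro m hm τ
    simp only [ip]
    rw [show (∫ x, τ x * ψ x ∂ fr.ν m) = ∫ _, (0 : ℝ) ∂ fr.ν m from
      integral_congr_ae ((hψ_zero m hm).mono fun x hx => by simp [hx])]
    simp
  -- ψ belongs to 𝓒
  have hψC : ψ ∈ fr.C := by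
    refine ⟨⟨hψm, hψ2, ?_⟩, ?_, ?_⟩
    · -- norms of ψ converge (to 0)
      rw [show ip (fr.ν 0) ψ ψ = 0 from hipzl 0 (fun k => h0ne k) ψ]
      refine tendsto_zero_aux hmono (C := 1) one_pos.le (fun k => ?_) (fun m hm => hipzl m hm ψ)
      have hv : ip (fr.ν (n k)) ψ ψ = c k * (c k * a (n k)) := by
        rw [hipl k ψ, hipr k (φs (n k))]
      have hca : c k * a (n k) = b k := by
        show b k / a (n k) * a (n k) = b k
        exact div_mul_cancel₀ _ (hapos k).ne'
      have hveq : ip (fr.ν (n k)) ψ ψ = b k ^ 2 / a (n k) := by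
        rw [hv, hca]
        show b k / a (n k) * b k = b k ^ 2 / a (n k)
        ring
      rw [hveq, abs_of_nonneg (div_nonneg (sq_nonneg _) (hapos k).le)]
      rw [div_le_div_iff₀ (hapos k) (hbpos k)]
      calc b k ^ 2 * b k ≤ b k ^ 2 * b k ^ 2 := by nlinarith [hb1 k, hbpos k]
        _ = (k : ℝ) + 1 := hb4 k
        _ ≤ a (n k) := hak k
        _ = 1 * a (n k) := (one_mul _).symm
    · -- condition (c1)
      intro m hm1
      by_cases hmem : ∃ k, m = n k
      · obtain ⟨k, rfl⟩ := hmem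
        obtain ⟨g, hgF, hg⟩ := (hφs (n k)).2.1 (n k) hm1
        refine ⟨fun x => c k * g x + 0 * g x, fr.F_linear g hgF g hgF (c k) 0, ?_⟩
        filter_upwards [hψ_eq k, hg] with x hx hx'
        simp only [hx, hx']; ring
      · push_neg at hmem
        obtain ⟨g₀, hg₀F, -⟩ :=
          fr.F_dense (fun _ => 0) measurable_const MemLp.zero' 1 one_pos
        refine ⟨fun x => 0 * g₀ x + 0 * g₀ x, fr.F_linear g₀ hg₀F g₀ hg₀F 0 0, ?_⟩
        filter_upwards [hψ_zero m hmem] with x hx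
        simp only [hx]; ring
    · -- condition (c2)
      intro τ hτ
      obtain ⟨B, hBub⟩ := (fr.F_tendsto τ hτ).bddAbove_range
      have hB' : ∀ m, ip (fr.ν m) τ τ ≤ B := fun m => hBub ⟨m, rfl⟩
      rw [show ip (fr.ν 0) ψ τ = 0 from hipzl 0 (fun k => h0ne k) τ]
      refine tendsto_zero_aux hmono (C := Real.sqrt B) (Real.sqrt_nonneg B)
        (fun k => ?_) (fun m hm => hipzl m hm τ)
      rw [hipl k τ, abs_mul, abs_of_nonneg (hcpos k).le]
      have hcs := abs_ip_le (fr.ν (n k)) (φs (n k)) τ (hC2 (n k) (n k)) (fr.F_memL2 τ hτ (n k))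
      have hsB : Real.sqrt (ip (fr.ν (n k)) τ τ) ≤ Real.sqrt B :=
        Real.sqrt_le_sqrt (hB' (n k))
      have hsa : b k ^ 2 ≤ Real.sqrt (a (n k)) := by
        rw [hb2]
        exact Real.sqrt_le_sqrt (hak k)
      have hsapos : 0 < Real.sqrt (a (n k)) := Real.sqrt_pos.mpr (hapos k)
      have hkey : c k * Real.sqrt (a (n k)) ≤ 1 / b k := by
        show b k / a (n k) * Real.sqrt (a (n k)) ≤ 1 / b k
        rw [div_mul_eq_mul_div, div_le_div_iff₀ (hapos k) (hbpos k)]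
        have hss : Real.sqrt (a (n k)) * Real.sqrt (a (n k)) = a (n k) :=
          Real.mul_self_sqrt (hapos k).le
        nlinarith [hbpos k, hsa, hsapos, mul_nonneg (sub_nonneg.mpr hsa) hsapos.le]
      have hcs' : |ip (fr.ν (n k)) (φs (n k)) τ| ≤
          Real.sqrt (a (n k)) * Real.sqrt (ip (fr.ν (n k)) τ τ) := hcs
      calc c k * |ip (fr.ν (n k)) (φs (n k)) τ|
          ≤ c k * (Real.sqrt (a (n k)) * Real.sqrt (ip (fr.ν (n k)) τ τ)) :=
            mul_le_mul_of_nonneg_left hcs' (hcpos k).le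
        _ = (c k * Real.sqrt (a (n k))) * Real.sqrt (ip (fr.ν (n k)) τ τ) := by ring
        _ ≤ (1 / b k) * Real.sqrt B := by
            apply mul_le_mul hkey hsB (Real.sqrt_nonneg _)
            positivity
        _ = Real.sqrt B / b k := by ring
  -- the contradiction
  have hlim := hw ψ hψC
  have hval : ∀ k, ip (fr.ν (n k)) (φs (n k)) ψ = b k := by
    intro k
    rw [hipr k (φs (n k))]
    show b k / a (n k) * a (n k) = b k
    exact div_mul_cancel₀ _ (hapos k).ne'
  obtain ⟨B₂, hB₂ub⟩ := hlim.bddAbove_range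
  have hB₂ : ∀ k, b k ≤ B₂ := fun k => by
    have : ip (fr.ν (n k)) (φs (n k)) ψ ≤ B₂ := hB₂ub ⟨n k, rfl⟩
    rwa [hval k] at this
  obtain ⟨K, hK⟩ := exists_sqrt_sqrt_gt B₂
  exact absurd (hB₂ K) (not_le.mpr hK)


end Mosco
end
end
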